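/- Let (M, I, J, K, Ω) be a compact balanced HKT manifold. Then the Bott–Chern Laplacian on (p,0)-forms satisfies Δ_BC = Δ_∂ Δ_∂ + ∂*∂ + ∂_J*∂_J, and consequently 𝓗^{p,0}_BC(M) = 𝓗^{p,0}_∂(M) for every p. -/

import Mathlib

/-- **Proposition 3.8 (balanced HKT, Bott–Chern Laplacian).** Let `(M,I,J,K,Ω)` be a
compact balanced HKT manifold, modelled as in the previous statement by a graded inner
product space with operators `∂, ∂_J, ∂*, ∂_J*, L, Λ` satisfying the balanced HKT
identities. Then the Bott–Chern Laplacian on `(p,0)`-forms satisfies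
`Δ_BC = Δ_∂ Δ_∂ + ∂*∂ + ∂_J*∂_J`, and consequently
`𝓗^{p,0}_BC(M) = 𝓗^{p,0}_∂(M)` for every `p`. -/
theorem balanced_HKT_bott_chern_laplacian
    {V : Type*} [NormedAddCommGroup V] [InnerProductSpace ℂ V] (n : ℕ)
    (A : ℕ → Submodule ℂ V)
    (del delJ delS delJS L Lam : Module.End ℂ V)
    (hdeldeg : ∀ p, ∀ x ∈ A p, del x ∈ A (p + 1))
    (hdelJdeg : ∀ p, ∀ x ∈ A p, delJ x ∈ A (p + 1))
    (hLdeg : ∀ p, ∀ x ∈ A p, L x ∈ A (p + 2))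
    (hd2 : del * del = 0) (hdJ2 : delJ * delJ = 0)
    (hanti : del * delJ + delJ * del = 0)
    (hdL : del * L = L * del) (hdJL : delJ * L = L * delJ)
    (hadj : ∀ x y : V, (inner ℂ (del x) y : ℂ) = inner ℂ x (delS y))
    (hadjJ : ∀ x y : V, (inner ℂ (delJ x) y : ℂ) = inner ℂ x (delJS y))
    (hadjL : ∀ x y : V, (inner ℂ (L x) y : ℂ) = inner ℂ x (Lam y))
    (h1 : delS * L - L * delS = -delJ)
    (h2 : del * Lam - Lam * del = delJS)
    (h3 : L * delJS - delJS * L = -del)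
    (h4 : Lam * delJ - delJ * Lam = delS) :
    (delS * del + delJS * delJ +
      del * delJ * delJS * delS + delJS * delS * del * delJ +
      delJS * del * delS * delJ + delS * delJ * delJS * del =
     (del * delS + delS * del) * (del * delS + delS * del) +
      delS * del + delJS * delJ) ∧
    ∀ p, ∀ α ∈ A p,
      ((del α = 0 ∧ delJ α = 0 ∧ delJS (delS α) = 0) ↔ (del α = 0 ∧ delS α = 0)) := by
  -- a linear map vanishing against all vectors is zero
  have inner_zero : ∀ T : Module.End ℂ V, (∀ x y : V, (inner ℂ x (T y) : ℂ) = 0) → T = 0 := by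
    intro T h
    ext y
    have := h (T y) y
    simpa [inner_self_eq_zero] using this
  -- (∂*)² = 0
  have eds2 : delS * delS = 0 := by
    apply inner_zero
    intro x y
    have : ((inner ℂ x ((delS * delS) y)) : ℂ) = inner ℂ ((del * del) x) y := by
      simp only [Module.End.mul_apply]
      rw [← hadj, ← hadj]
    rw [this, hd2]
    simp
  -- ∂ ∂_J* + ∂_J* ∂ = 0
  have e1 : del * delJS + delJS * del = 0 := by
    rw [← h2]
    have : del * (del * Lam - Lam * del) + (del * Lam - Lam * del) * del
        = del * del * Lam - Lam * (del * del) := by noncomm_ring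
    rw [this, hd2]
    simp
  -- ∂* ∂_J + ∂_J ∂* = 0
  have e2 : delS * delJ + delJ * delS = 0 := by
    rw [← h4]
    have : (Lam * delJ - delJ * Lam) * delJ + delJ * (Lam * delJ - delJ * Lam)
        = Lam * (delJ * delJ) - delJ * delJ * Lam := by noncomm_ring
    rw [this, hdJ2]
    simp
  -- ∂* ∂_J* + ∂_J* ∂* = 0
  have e3 : delS * delJS + delJS * delS = 0 := by
    apply inner_zero
    intro x y
    have hx1 : ((inner ℂ x (delS (delJS y))) : ℂ) = inner ℂ (delJ (del x)) y := by
      rw [← hadj, ← hadjJ]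
    have hx2 : ((inner ℂ x (delJS (delS y))) : ℂ) = inner ℂ (del (delJ x)) y := by
      rw [← hadjJ, ← hadj]
    have hsum : delJ (del x) + del (delJ x) = 0 := by
      have := congrArg (fun T : Module.End ℂ V => T x) hanti
      simpa [add_comm] using this
    calc ((inner ℂ x ((delS * delJS + delJS * delS) y)) : ℂ)
        = inner ℂ x (delS (delJS y)) + inner ℂ x (delJS (delS y)) := by
          simp [LinearMap.add_apply, Module.End.mul_apply, inner_add_right]
      _ = inner ℂ (delJ (del x) + del (delJ x)) y := by
          rw [hx1, hx2, inner_add_left]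
      _ = 0 := by rw [hsum]; simp
  -- Δ_∂ = Δ_{∂_J}
  have eDelta : delJ * delJS + delJS * delJ = del * delS + delS * del := by
    have key : delJ * delJS + delJS * delJ - (del * delS + delS * del) = 0 := by
      rw [← h2, ← h4]
      have : delJ * (del * Lam - Lam * del) + (del * Lam - Lam * del) * delJ
            - (del * (Lam * delJ - delJ * Lam) + (Lam * delJ - delJ * Lam) * del)
          = (del * delJ + delJ * del) * Lam - Lam * (del * delJ + delJ * del) := by
        noncomm_ring
      rw [this, hanti]
      simp
    exact sub_eq_zero.mp key
  -- directed anticommutation relations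
  have e1' : del * delJS = -(delJS * del) := eq_neg_of_add_eq_zero_left e1
  have e2' : delJ * delS = -(delS * delJ) := eq_neg_of_add_eq_zero_right e2
  have e3' : delS * delJS = -(delJS * delS) := eq_neg_of_add_eq_zero_left e3
  have hanti' : delJ * del = -(del * delJ) := eq_neg_of_add_eq_zero_right hanti
  -- Δ² expansion
  have hΔ2 : (del * delS + delS * del) * (del * delS + delS * del)
      = del * delS * (del * delS) + delS * del * (delS * del) := by
    have : (del * delS + delS * del) * (del * delS + delS * del)
        = del * delS * (del * delS) + del * (delS * delS) * del
          + delS * (del * del) * delS + delS * del * (delS * del) := by noncomm_ring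
    rw [this, eds2, hd2]
    simp
  have hA : del * delJ * delJS * delS
      = del * delS * (del * delS) - delJS * del * delS * delJ := by
    calc del * delJ * delJS * delS
        = del * (delJ * delJS + delJS * delJ) * delS - (del * delJS) * (delJ * delS) := by
          noncomm_ring
      _ = del * (del * delS + delS * del) * delS - (-(delJS * del)) * (-(delS * delJ)) := by
          rw [eDelta, e1', e2']
      _ = del * del * (delS * delS) + del * delS * (del * delS)
            - delJS * del * delS * delJ := by noncomm_ring
      _ = del * delS * (del * delS) - delJS * del * delS * delJ := by
          rw [hd2]; simp
  have hB : delS * delJ * delJS * del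
      = delS * del * (delS * del) - delJS * delS * del * delJ := by
    calc delS * delJ * delJS * del
        = delS * (delJ * delJS + delJS * delJ) * del - (delS * delJS) * (delJ * del) := by
          noncomm_ring
      _ = delS * (del * delS + delS * del) * del - (-(delJS * delS)) * (-(del * delJ)) := by
          rw [eDelta, e3', hanti']
      _ = delS * delS * (del * del) + delS * del * (delS * del)
            - delJS * delS * del * delJ := by noncomm_ring
      _ = delS * del * (delS * del) - delJS * delS * del * delJ := by
          rw [eds2]; simp
  constructor
  · rw [hA, hB, hΔ2]
    abel
  · intro p α _
    constructor
    · rintro ⟨hd, hj, hjs⟩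
      refine ⟨hd, ?_⟩
      -- ∂* α = -∂_J(Λ α)
      have hds : delS α = -(delJ (Lam α)) := by
        have := congrArg (fun T : Module.End ℂ V => T α) h4
        simp only [LinearMap.sub_apply, Module.End.mul_apply] at this
        rw [hj] at this
        simpa using this.symm
      have : ((inner ℂ (delS α) (delS α)) : ℂ) = 0 := by
        nth_rewrite 1 [hds]
        rw [inner_neg_left, hadjJ, hjs]
        simp
      exact inner_self_eq_zero.mp this
    · rintro ⟨hd, hds⟩
      refine ⟨hd, ?_, ?_⟩
      · -- ∂_J α = 0 from Δ_{∂_J} α = Δ_∂ α = 0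
        have hpt : delJ (delJS α) + delJS (delJ α) = 0 := by
          have := congrArg (fun T : Module.End ℂ V => T α) eDelta
          simp only [LinearMap.add_apply, Module.End.mul_apply] at this
          rw [hd, hds] at this
          simpa using this
        have hzero : ((inner ℂ (delJS α) (delJS α)) : ℂ)
            + inner ℂ (delJ α) (delJ α) = 0 := by
          have h1' : ((inner ℂ α (delJ (delJS α))) : ℂ) = inner ℂ (delJS α) (delJS α) := by
            rw [← inner_conj_symm, hadjJ, inner_conj_symm]
          have h2' : ((inner ℂ α (delJS (delJ α))) : ℂ) = inner ℂ (delJ α) (delJ α) := by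
            rw [← hadjJ]
          rw [← h1', ← h2', ← inner_add_right, hpt, inner_zero_right]
        have hre := congrArg RCLike.re hzero
        simp only [map_add, map_zero] at hre
        have ha := inner_self_nonneg (𝕜 := ℂ) (x := delJS α)
        have hb : RCLike.re ((inner ℂ (delJ α) (delJ α)) : ℂ) ≤ 0 := by linarith
        exact re_inner_self_nonpos.mp hb
      · rw [hds]; simp
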